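/- For every n ≥ 1, the number of plane partitions with n rows, n columns and largest part at most 2 equals (2n)!(2n+1)! / (n!(n+1)!)². -/

import Mathlib

open Finset

/-- Weakly decreasing sequences of length `k` (encoded as eventually-zero
antitone functions `ℕ → ℕ`) with values at most `m`. -/
def DSeq (k m : ℕ) : Type :=
  {f : ℕ → ℕ // Antitone f ∧ f 0 ≤ m ∧ ∀ t, k ≤ t → f t = 0}

lemma DSeq.le {k m : ℕ} (f : DSeq k m) (t : ℕ) : f.1 t ≤ m :=
  le_trans (f.2.1 (Nat.zero_le t)) f.2.2.1

instance (k m : ℕ) : Finite (DSeq k m) := by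
  have : Function.Injective (fun f : DSeq k m => fun i : Fin k => (⟨f.1 i, Nat.lt_succ_of_le (f.le i)⟩ : Fin (m+1))) := by
    intro f g h
    apply Subtype.ext
    funext t
    by_cases ht : t < k
    · have := congrFun h ⟨t, ht⟩
      simpa [Fin.ext_iff] using this
    · rw [f.2.2.2 t (le_of_not_gt ht), g.2.2.2 t (le_of_not_gt ht)]
  exact Finite.of_injective _ this

def dseqZeroEquiv (k : ℕ) : DSeq k 0 ≃ Unit where
  toFun _ := ()
  invFun _ := ⟨fun _ => 0, antitone_const, le_refl 0, fun _ _ => rfl⟩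
  left_inv f := by
    apply Subtype.ext
    funext t
    exact (Nat.le_zero.mp (f.le t)).symm
  right_inv _ := rfl

def dseqLenZeroEquiv (m : ℕ) : DSeq 0 m ≃ Unit where
  toFun _ := ()
  invFun _ := ⟨fun _ => 0, antitone_const, Nat.zero_le m, fun _ _ => rfl⟩
  left_inv f := by
    apply Subtype.ext
    funext t
    exact (f.2.2.2 t (Nat.zero_le t)).symm
  right_inv _ := rfl

/-- Pascal-type decomposition. -/
def dseqSuccEquiv (k m : ℕ) :
    DSeq (k+1) (m+1) ≃ DSeq (k+1) m ⊕ DSeq k (m+1) where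
  toFun f :=
    if h : f.1 k = 0 then
      Sum.inr ⟨f.1, f.2.1, f.2.2.1, fun t ht => by
        have := f.2.1 ht; omega⟩
    else
      Sum.inl ⟨fun t => f.1 t - 1, fun a b hab => Nat.sub_le_sub_right (f.2.1 hab) 1,
        Nat.sub_le_sub_right f.2.2.1 1, fun t ht => by
        show f.1 t - 1 = 0; rw [f.2.2.2 t ht]⟩
  invFun g :=
    match g with
    | Sum.inl g => ⟨fun t => if t ≤ k then g.1 t + 1 else 0, by
        intro a b hab
        dsimp only
        split_ifs with hb ha ha
        · exact Nat.succ_le_succ (g.2.1 hab)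
        · omega
        · exact Nat.zero_le _
        · exact Nat.zero_le _, by
        simp only [Nat.zero_le, if_true]
        exact Nat.succ_le_succ g.2.2.1, by
        intro t ht
        show (if t ≤ k then g.1 t + 1 else 0) = 0
        rw [if_neg]
        omega⟩
    | Sum.inr g => ⟨g.1, g.2.1, g.2.2.1, fun t ht => g.2.2.2 t (le_trans (Nat.le_succ k) ht)⟩
  left_inv f := by
    by_cases h : f.1 k = 0
    · simp only [h, dif_pos]
      exact Subtype.ext rfl
    · simp only [h, dif_neg, not_false_iff]
      apply Subtype.ext
      funext t
      dsimp only
      by_cases ht : t ≤ k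
      · rw [if_pos ht]
        have : 1 ≤ f.1 t := lt_of_lt_of_le (Nat.pos_of_ne_zero h) (f.2.1 ht)
        omega
      · rw [if_neg ht, f.2.2.2 t (by omega)]
  right_inv g := by
    match g with
    | Sum.inl g =>
      have hk : (if k ≤ k then g.1 k + 1 else 0) ≠ 0 := by simp
      dsimp only
      rw [dif_neg hk]
      congr 1
      apply Subtype.ext
      funext t
      dsimp only
      by_cases ht : t ≤ k
      · rw [if_pos ht]; omega
      · rw [if_neg ht, g.2.2.2 t (by omega)]
    | Sum.inr g =>
      have hk : g.1 k = 0 := g.2.2.2 k le_rfl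
      dsimp only
      rw [dif_pos hk]
      congr 1

lemma card_dseq : ∀ k m : ℕ, Nat.card (DSeq k m) = (m + k).choose k := by
  intro k
  induction k with
  | zero => intro m; rw [Nat.card_congr (dseqLenZeroEquiv m)]; simp
  | succ k ihk =>
    intro m
    induction m with
    | zero => rw [Nat.card_congr (dseqZeroEquiv (k+1))]; simp
    | succ m ihm =>
      rw [Nat.card_congr (dseqSuccEquiv k m), Nat.card_sum, ihm, ihk (m+1)]
      have e1 : m + 1 + (k + 1) = (m + (k+1)) + 1 := by ring
      have e2 : m + 1 + k = m + (k + 1) := by ring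
      rw [e1, e2, Nat.choose_succ_succ' (m + (k+1)) k]
      omega

namespace Refl

def cSeq (a b : ℕ → ℕ) (i : ℕ) : ℕ → ℕ := fun t => if t ≤ i then b t - 1 else a (t-1)
def dSeq (a b : ℕ → ℕ) (i : ℕ) : ℕ → ℕ := fun t => if t < i then a t + 1 else b (t+1)
def aSeq (c d : ℕ → ℕ) (j : ℕ) : ℕ → ℕ := fun t => if t < j then d t - 1 else c (t+1)
def bSeq (c d : ℕ → ℕ) (j : ℕ) : ℕ → ℕ := fun t => if t ≤ j then c t + 1 else d (t-1)

section Forward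
variable {m : ℕ} {a b : ℕ → ℕ} {i : ℕ}
variable (ha : Antitone a) (hb : Antitone b)
variable (ha0 : a 0 ≤ m + 1) (hb0 : b 0 ≤ m + 1)
variable (haz : ∀ t, m + 1 ≤ t → a t = 0) (hbz : ∀ t, m + 1 ≤ t → b t = 0)
variable (him : i ≤ m) (hcross : a i < b i) (hmin : ∀ t, t < i → b t ≤ a t)

include hb hcross ha in
lemma cSeq_antitone : Antitone (cSeq a b i) := by
  intro s t hst
  unfold cSeq
  by_cases ht : t ≤ i <;> by_cases hs : s ≤ i
  · rw [if_pos ht, if_pos hs]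
    exact Nat.sub_le_sub_right (hb hst) 1
  · omega
  · rw [if_neg ht, if_pos hs]
    have h1 : a (t-1) ≤ a i := ha (by omega)
    have h2 : b i ≤ b s := hb (by omega)
    omega
  · rw [if_neg ht, if_neg hs]
    exact ha (by omega)

include hb0 in
lemma cSeq_bound : cSeq a b i 0 ≤ m := by
  unfold cSeq
  rw [if_pos (Nat.zero_le i)]
  omega

include him haz in
lemma cSeq_zero : ∀ t, m + 2 ≤ t → cSeq a b i t = 0 := by
  intro t htm
  unfold cSeq
  rw [if_neg (by omega)]
  exact haz _ (by omega)

include ha hb hmin in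
lemma dSeq_antitone : Antitone (dSeq a b i) := by
  intro s t hst
  unfold dSeq
  by_cases ht : t < i <;> by_cases hs : s < i
  · rw [if_pos ht, if_pos hs]
    exact Nat.succ_le_succ (ha hst)
  · omega
  · rw [if_neg ht, if_pos hs]
    have h1 : b (t+1) ≤ b s := hb (by omega)
    have h2 : b s ≤ a s := hmin s hs
    omega
  · rw [if_neg ht, if_neg hs]
    exact hb (by omega)

include ha0 hb hb0 in
lemma dSeq_bound : dSeq a b i 0 ≤ m + 2 := by
  unfold dSeq
  by_cases h0 : 0 < i
  · rw [if_pos h0]; omega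
  · rw [if_neg h0]
    have : b (0+1) ≤ b 0 := hb (Nat.zero_le _)
    omega

include him hbz in
lemma dSeq_zero : ∀ t, m ≤ t → dSeq a b i t = 0 := by
  intro t htm
  unfold dSeq
  rw [if_neg (by omega)]
  exact hbz _ (by omega)

include ha hb hcross hmin in
lemma find_cd (h : ∃ t, dSeq a b i t ≤ cSeq a b i t + 1) : Nat.find h = i := by
  rw [Nat.find_eq_iff]
  constructor
  · unfold dSeq cSeq
    rw [if_neg (lt_irrefl i), if_pos (le_refl i)]
    have : b (i+1) ≤ b i := hb (by omega)
    omega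
  · intro t hti hQ
    unfold dSeq cSeq at hQ
    rw [if_pos hti, if_pos (le_of_lt hti)] at hQ
    have h1 : b i ≤ b t := hb (le_of_lt hti)
    have h2 : b t ≤ a t := hmin t hti
    omega

include hb hcross in
lemma aSeq_roundtrip : aSeq (cSeq a b i) (dSeq a b i) i = a := by
  funext t
  unfold aSeq cSeq dSeq
  by_cases ht : t < i
  · rw [if_pos ht, if_pos ht]; omega
  · rw [if_neg ht, if_neg (by omega : ¬ t + 1 ≤ i)]
    congr 1 <;> omega

include hb hcross in
lemma bSeq_roundtrip : bSeq (cSeq a b i) (dSeq a b i) i = b := by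
  funext t
  unfold bSeq cSeq dSeq
  by_cases ht : t ≤ i
  · rw [if_pos ht, if_pos ht]
    have h1 : b i ≤ b t := hb ht
    omega
  · rw [if_neg ht, if_neg (by omega : ¬ t - 1 < i)]
    congr 1 <;> omega

end Forward

section Backward
variable {m : ℕ} {c d : ℕ → ℕ} {j : ℕ}
variable (hc : Antitone c) (hd : Antitone d)
variable (hc0 : c 0 ≤ m) (hd0 : d 0 ≤ m + 2)
variable (hcz : ∀ t, m + 2 ≤ t → c t = 0) (hdz : ∀ t, m ≤ t → d t = 0)
variable (hjm : j ≤ m) (hQ : d j ≤ c j + 1) (hmin : ∀ t, t < j → c t + 2 ≤ d t)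

include hd hc hmin in
lemma aSeq_antitone : Antitone (aSeq c d j) := by
  intro s t hst
  unfold aSeq
  by_cases ht : t < j <;> by_cases hs : s < j
  · rw [if_pos ht, if_pos hs]
    exact Nat.sub_le_sub_right (hd hst) 1
  · omega
  · rw [if_neg ht, if_pos hs]
    have h1 : c (t+1) ≤ c (s+1) := hc (by omega)
    have h2 : c s + 2 ≤ d s := hmin s hs
    have h3 : c (s+1) ≤ c s := hc (Nat.le_succ s)
    omega
  · rw [if_neg ht, if_neg hs]
    exact hc (by omega)

include hc hc0 hd0 in
lemma aSeq_bound : aSeq c d j 0 ≤ m + 1 := by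
  unfold aSeq
  by_cases h0 : 0 < j
  · rw [if_pos h0]; omega
  · rw [if_neg h0]
    have : c (0+1) ≤ c 0 := hc (Nat.zero_le _)
    omega

include hjm hcz in
lemma aSeq_zero : ∀ t, m + 1 ≤ t → aSeq c d j t = 0 := by
  intro t htm
  unfold aSeq
  rw [if_neg (by omega)]
  exact hcz _ (by omega)

include hc hd hQ in
lemma bSeq_antitone : Antitone (bSeq c d j) := by
  intro s t hst
  unfold bSeq
  by_cases ht : t ≤ j <;> by_cases hs : s ≤ j
  · rw [if_pos ht, if_pos hs]
    exact Nat.succ_le_succ (hc hst)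
  · omega
  · rw [if_neg ht, if_pos hs]
    have h1 : d (t-1) ≤ d j := hd (by omega)
    have h2 : c j ≤ c s := hc hs
    omega
  · rw [if_neg ht, if_neg hs]
    exact hd (by omega)

include hc0 in
lemma bSeq_bound : bSeq c d j 0 ≤ m + 1 := by
  unfold bSeq
  rw [if_pos (Nat.zero_le j)]
  omega

include hjm hdz in
lemma bSeq_zero : ∀ t, m + 1 ≤ t → bSeq c d j t = 0 := by
  intro t htm
  unfold bSeq
  rw [if_neg (by omega)]
  exact hdz _ (by omega)

include hc in
lemma abSeq_cross : aSeq c d j j < bSeq c d j j := by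
  unfold aSeq bSeq
  rw [if_neg (lt_irrefl j), if_pos (le_refl j)]
  have : c (j+1) ≤ c j := hc (by omega)
  omega

include hc hmin in
lemma find_ab (h : ∃ t, aSeq c d j t < bSeq c d j t) : Nat.find h = j := by
  rw [Nat.find_eq_iff]
  refine ⟨abSeq_cross hc, ?_⟩
  intro t htj hP
  unfold aSeq bSeq at hP
  rw [if_pos htj, if_pos (le_of_lt htj)] at hP
  have := hmin t htj
  omega

include hmin in
lemma cSeq_roundtrip : cSeq (aSeq c d j) (bSeq c d j) j = c := by
  funext t
  unfold cSeq aSeq bSeq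
  by_cases ht : t ≤ j
  · rw [if_pos ht, if_pos ht]; omega
  · rw [if_neg ht, if_neg (by omega : ¬ t - 1 < j)]
    congr 1 <;> omega

include hmin in
lemma dSeq_roundtrip : dSeq (aSeq c d j) (bSeq c d j) j = d := by
  funext t
  unfold dSeq aSeq bSeq
  by_cases ht : t < j
  · rw [if_pos ht, if_pos ht]
    have := hmin t ht
    omega
  · rw [if_neg ht, if_neg (by omega : ¬ t + 1 ≤ j)]
    congr 1 <;> omega

end Backward

end Refl

section Assemble

def BadPair (m : ℕ) : Type :=
  {p : DSeq (m+1) (m+1) × DSeq (m+1) (m+1) // ∃ t, p.1.1 t < p.2.1 t}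

instance (m : ℕ) : Finite (BadPair m) := by unfold BadPair; infer_instance

lemma BadPair.find_le {m : ℕ} (p : BadPair m) : Nat.find p.2 ≤ m := by
  have h1 := Nat.find_spec p.2
  by_contra h
  rw [p.1.2.2.2.2 _ (by omega)] at h1
  omega

lemma BadPair.find_min' {m : ℕ} (p : BadPair m) :
    ∀ t, t < Nat.find p.2 → p.1.2.1 t ≤ p.1.1.1 t :=
  fun _ ht => le_of_not_gt (Nat.find_min p.2 ht)

def jex {m : ℕ} (q : DSeq (m+2) m × DSeq m (m+2)) : ∃ t, q.2.1 t ≤ q.1.1 t + 1 :=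
  ⟨m, by rw [q.2.2.2.2 m le_rfl]; omega⟩

lemma jex_le {m : ℕ} (q : DSeq (m+2) m × DSeq m (m+2)) : Nat.find (jex q) ≤ m :=
  Nat.find_min' _ (by rw [q.2.2.2.2 m le_rfl]; omega)

lemma jex_min {m : ℕ} (q : DSeq (m+2) m × DSeq m (m+2)) :
    ∀ t, t < Nat.find (jex q) → q.1.1 t + 2 ≤ q.2.1 t :=
  fun t ht => by have := Nat.find_min (jex q) ht; omega

lemma Refl.left_round {a b : ℕ → ℕ} (ha : Antitone a) (hb : Antitone b)
    (hx : ∃ t, a t < b t)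
    (h : ∃ t, Refl.dSeq a b (Nat.find hx) t ≤ Refl.cSeq a b (Nat.find hx) t + 1) :
    Refl.aSeq (Refl.cSeq a b (Nat.find hx)) (Refl.dSeq a b (Nat.find hx)) (Nat.find h) = a ∧
    Refl.bSeq (Refl.cSeq a b (Nat.find hx)) (Refl.dSeq a b (Nat.find hx)) (Nat.find h) = b := by
  have hmin : ∀ t < Nat.find hx, b t ≤ a t := fun t ht => le_of_not_gt (Nat.find_min hx ht)
  rw [Refl.find_cd ha hb (Nat.find_spec hx) hmin h]
  exact ⟨Refl.aSeq_roundtrip hb (Nat.find_spec hx), Refl.bSeq_roundtrip hb (Nat.find_spec hx)⟩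

lemma Refl.right_round {c d : ℕ → ℕ} (hc : Antitone c)
    (jq : ∃ t, d t ≤ c t + 1)
    (h : ∃ t, Refl.aSeq c d (Nat.find jq) t < Refl.bSeq c d (Nat.find jq) t) :
    Refl.cSeq (Refl.aSeq c d (Nat.find jq)) (Refl.bSeq c d (Nat.find jq)) (Nat.find h) = c ∧
    Refl.dSeq (Refl.aSeq c d (Nat.find jq)) (Refl.bSeq c d (Nat.find jq)) (Nat.find h) = d := by
  have hmin : ∀ t < Nat.find jq, c t + 2 ≤ d t :=
    fun t ht => by have := Nat.find_min jq ht; omega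
  rw [Refl.find_ab hc hmin h]
  exact ⟨Refl.cSeq_roundtrip hmin, Refl.dSeq_roundtrip hmin⟩

noncomputable def badEquiv (m : ℕ) : BadPair m ≃ DSeq (m+2) m × DSeq m (m+2) where
  toFun p :=
    (⟨Refl.cSeq p.1.1.1 p.1.2.1 (Nat.find p.2),
      Refl.cSeq_antitone p.1.1.2.1 p.1.2.2.1 (Nat.find_spec p.2),
      Refl.cSeq_bound p.1.2.2.2.1,
      Refl.cSeq_zero p.1.1.2.2.2 (BadPair.find_le p)⟩,
     ⟨Refl.dSeq p.1.1.1 p.1.2.1 (Nat.find p.2),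
      Refl.dSeq_antitone p.1.1.2.1 p.1.2.2.1 (BadPair.find_min' p),
      Refl.dSeq_bound p.1.2.2.1 p.1.1.2.2.1 p.1.2.2.2.1,
      Refl.dSeq_zero p.1.2.2.2.2 (BadPair.find_le p)⟩)
  invFun q :=
    ⟨(⟨Refl.aSeq q.1.1 q.2.1 (Nat.find (jex q)),
       Refl.aSeq_antitone q.1.2.1 q.2.2.1 (jex_min q),
       Refl.aSeq_bound q.1.2.1 q.1.2.2.1 q.2.2.2.1,
       Refl.aSeq_zero q.1.2.2.2 (jex_le q)⟩,
      ⟨Refl.bSeq q.1.1 q.2.1 (Nat.find (jex q)),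
       Refl.bSeq_antitone q.1.2.1 q.2.2.1 (Nat.find_spec (jex q)),
       Refl.bSeq_bound q.1.2.2.1,
       Refl.bSeq_zero q.2.2.2.2 (jex_le q)⟩),
     ⟨Nat.find (jex q), Refl.abSeq_cross q.1.2.1⟩⟩
  left_inv := by
    rintro ⟨⟨⟨a, ha, ha0, haz⟩, ⟨b, hb, hb0, hbz⟩⟩, hx⟩
    apply Subtype.ext
    apply Prod.ext
    · apply Subtype.ext
      exact (Refl.left_round ha hb hx _).1
    · apply Subtype.ext
      exact (Refl.left_round ha hb hx _).2
  right_inv := by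
    rintro ⟨⟨c, hc, hc0, hcz⟩, ⟨d, hd, hd0, hdz⟩⟩
    apply Prod.ext
    · apply Subtype.ext
      exact (Refl.right_round hc _ _).1
    · apply Subtype.ext
      exact (Refl.right_round hc _ _).2

end Assemble

section PlanePartition

/-- number of entries in row `t` that are `≥ c` -/
def rowCount (n : ℕ) (π : Fin n → Fin n → ℕ) (c : ℕ) : ℕ → ℕ := fun t =>
  if h : t < n then ((Finset.univ : Finset (Fin n)).filter fun j => c ≤ π ⟨t, h⟩ j).card else 0

lemma count_lt {n v : ℕ} (hv : v ≤ n) :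
    ((Finset.univ : Finset (Fin n)).filter fun j : Fin n => (j : ℕ) < v).card = v := by
  have h : ∀ x ∈ Finset.range v, x < n := fun x hx => by
    have := Finset.mem_range.mp hx; omega
  have : ((Finset.univ : Finset (Fin n)).filter fun j : Fin n => (j : ℕ) < v) =
      (Finset.range v).attachFin h := by
    ext j
    simp [Finset.mem_attachFin, Finset.mem_range]
  rw [this, Finset.card_attachFin, Finset.card_range]

lemma row_iff {n : ℕ} (r : Fin n → ℕ) (hr : ∀ j j' : Fin n, j ≤ j' → r j' ≤ r j)
    (c : ℕ) (j : Fin n) :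
    c ≤ r j ↔ (j : ℕ) < (Finset.univ.filter fun j' => c ≤ r j').card := by
  constructor
  · intro h
    have hsub : Finset.Iic j ⊆ Finset.univ.filter fun j' => c ≤ r j' := by
      intro j' hj'
      rw [Finset.mem_Iic] at hj'
      simp only [Finset.mem_filter, Finset.mem_univ, true_and]
      exact le_trans h (hr j' j hj')
    have := Finset.card_le_card hsub
    rw [Fin.card_Iic] at this
    omega
  · intro h
    by_contra hc
    have hsub : (Finset.univ.filter fun j' => c ≤ r j') ⊆ Finset.Iio j := by
      intro j' hj'
      simp only [Finset.mem_filter, Finset.mem_univ, true_and] at hj'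
      rw [Finset.mem_Iio]
      by_contra hjj
      exact hc (le_trans hj' (hr j j' (le_of_not_gt hjj)))
    have := Finset.card_le_card hsub
    rw [Fin.card_Iio] at this
    omega

def PP (n : ℕ) : Type :=
  {π : Fin n → Fin n → ℕ //
    (∀ i j, π i j ≤ 2) ∧
    (∀ i i' j j', i ≤ i' → j ≤ j' → π i' j' ≤ π i j)}

def GoodPair (n : ℕ) : Type :=
  {p : DSeq n n × DSeq n n // ∀ t, p.2.1 t ≤ p.1.1 t}

instance (n : ℕ) : Finite (GoodPair n) := by unfold GoodPair; infer_instance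

section PPEquiv
variable {n : ℕ}

lemma rowCount_antitone (π : Fin n → Fin n → ℕ)
    (hπ : ∀ i i' j j', i ≤ i' → j ≤ j' → π i' j' ≤ π i j) (c : ℕ) :
    Antitone (rowCount n π c) := by
  intro s t hst
  unfold rowCount
  by_cases ht : t < n
  · have hs : s < n := by omega
    rw [dif_pos ht, dif_pos hs]
    apply Finset.card_le_card
    intro j hj
    simp only [Finset.mem_filter, Finset.mem_univ, true_and] at hj ⊢
    exact le_trans hj (hπ ⟨s, hs⟩ ⟨t, ht⟩ j j hst le_rfl)
  · rw [dif_neg ht]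
    exact Nat.zero_le _

lemma rowCount_le (π : Fin n → Fin n → ℕ) (c t : ℕ) : rowCount n π c t ≤ n := by
  unfold rowCount
  split_ifs
  · calc ((Finset.univ : Finset (Fin n)).filter _).card
        ≤ (Finset.univ : Finset (Fin n)).card := Finset.card_filter_le _ _
      _ = n := by simp
  · exact Nat.zero_le _

lemma rowCount_zero (π : Fin n → Fin n → ℕ) (c : ℕ) : ∀ t, n ≤ t → rowCount n π c t = 0 := by
  intro t ht
  unfold rowCount
  rw [dif_neg (by omega)]

/-- The bijection between plane partitions with entries `≤ 2` in an `n × n` box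
and nested pairs of weakly decreasing sequences. -/
def ppEquiv (n : ℕ) : PP n ≃ GoodPair n where
  toFun π :=
    ⟨(⟨rowCount n π.1 1, rowCount_antitone π.1 π.2.2 1,
        rowCount_le π.1 1 0, rowCount_zero π.1 1⟩,
      ⟨rowCount n π.1 2, rowCount_antitone π.1 π.2.2 2,
        rowCount_le π.1 2 0, rowCount_zero π.1 2⟩),
     by
      intro t
      unfold rowCount
      dsimp only
      split_ifs with h
      · apply Finset.card_le_card
        intro j hj
        simp only [Finset.mem_filter, Finset.mem_univ, true_and] at hj ⊢
        omega
      · exact le_refl 0⟩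
  invFun p :=
    ⟨fun i j => (if (j : ℕ) < p.1.1.1 (i : ℕ) then 1 else 0) +
        (if (j : ℕ) < p.1.2.1 (i : ℕ) then 1 else 0),
     by
      constructor
      · intro i j
        dsimp only
        split_ifs <;> omega
      · intro i i' j j' hi hj
        have h1 : p.1.1.1 (i' : ℕ) ≤ p.1.1.1 (i : ℕ) := p.1.1.2.1 (by exact_mod_cast hi)
        have h2 : p.1.2.1 (i' : ℕ) ≤ p.1.2.1 (i : ℕ) := p.1.2.2.1 (by exact_mod_cast hi)
        have h3 : (j : ℕ) ≤ (j' : ℕ) := hj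
        dsimp only
        split_ifs <;> omega⟩
  left_inv := by
    rintro ⟨π, hle, hmono⟩
    apply Subtype.ext
    funext i j
    dsimp only
    unfold rowCount
    simp only [dif_pos i.isLt]
    have hrow : ∀ j j' : Fin n, j ≤ j' → π i j' ≤ π i j :=
      fun j j' h => hmono i i j j' le_rfl h
    have heta : (⟨(i : ℕ), i.isLt⟩ : Fin n) = i := by
      apply Fin.ext; rfl
    rw [heta]
    have t1 := (row_iff (π i) hrow 1 j).symm
    have t2 := (row_iff (π i) hrow 2 j).symm
    rw [if_congr t1 rfl rfl, if_congr t2 rfl rfl]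
    have := hle i j
    split_ifs <;> omega
  right_inv := by
    rintro ⟨⟨⟨a, ha, ha0, haz⟩, ⟨b, hb, hb0, hbz⟩⟩, hdom⟩
    apply Subtype.ext
    apply Prod.ext <;> apply Subtype.ext <;> funext t <;>
      dsimp only <;> unfold rowCount
    · by_cases h : t < n
      · rw [dif_pos h]
        have e : ((Finset.univ : Finset (Fin n)).filter fun j : Fin n =>
            1 ≤ (if (j : ℕ) < a ((⟨t, h⟩ : Fin n) : ℕ) then 1 else 0) +
              (if (j : ℕ) < b ((⟨t, h⟩ : Fin n) : ℕ) then 1 else 0)) =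
            (Finset.univ.filter fun j : Fin n => (j : ℕ) < a t) := by
          apply Finset.filter_congr
          intro j _
          have : b t ≤ a t := hdom t
          dsimp only
          split_ifs <;> omega
        rw [e, count_lt (le_trans (ha (Nat.zero_le t)) ha0)]
      · rw [dif_neg h, haz t (by omega)]
    · by_cases h : t < n
      · rw [dif_pos h]
        have e : ((Finset.univ : Finset (Fin n)).filter fun j : Fin n =>
            2 ≤ (if (j : ℕ) < a ((⟨t, h⟩ : Fin n) : ℕ) then 1 else 0) +
              (if (j : ℕ) < b ((⟨t, h⟩ : Fin n) : ℕ) then 1 else 0)) =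
            (Finset.univ.filter fun j : Fin n => (j : ℕ) < b t) := by
          apply Finset.filter_congr
          intro j _
          have : b t ≤ a t := hdom t
          dsimp only
          split_ifs <;> omega
        rw [e, count_lt (le_trans (hb (Nat.zero_le t)) hb0)]
      · rw [dif_neg h, hbz t (by omega)]

end PPEquiv

end PlanePartition

section FinalCount

lemma card_pp (m : ℕ) :
    Nat.card (PP (m+1)) + (2*m+2).choose (m+2) * (2*m+2).choose m =
      ((2*m+2).choose (m+1))^2 := by
  classical
  have h1 : Nat.card (PP (m+1)) = Nat.card (GoodPair (m+1)) :=
    Nat.card_congr (ppEquiv (m+1))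
  have h2 : Nat.card (BadPair m) = (2*m+2).choose (m+2) * (2*m+2).choose m := by
    rw [Nat.card_congr (badEquiv m), Nat.card_prod, card_dseq, card_dseq]
    have e1 : m + (m+2) = 2*m+2 := by ring
    have e2 : m + 2 + m = 2*m+2 := by ring
    rw [e1, e2]
  have hg : Nat.card (GoodPair (m+1)) =
      Nat.card {p : DSeq (m+1) (m+1) × DSeq (m+1) (m+1) // ∀ t, p.2.1 t ≤ p.1.1 t} := rfl
  have h3 : Nat.card {p : DSeq (m+1) (m+1) × DSeq (m+1) (m+1) // ∀ t, p.2.1 t ≤ p.1.1 t} +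
      Nat.card {p : DSeq (m+1) (m+1) × DSeq (m+1) (m+1) // ¬ ∀ t, p.2.1 t ≤ p.1.1 t} =
      Nat.card (DSeq (m+1) (m+1) × DSeq (m+1) (m+1)) := by
    rw [← Nat.card_sum]
    exact Nat.card_congr (Equiv.sumCompl (fun p : DSeq (m+1) (m+1) × DSeq (m+1) (m+1) => ∀ t, p.2.1 t ≤ p.1.1 t))
  have h4 : Nat.card {p : DSeq (m+1) (m+1) × DSeq (m+1) (m+1) // ¬ ∀ t, p.2.1 t ≤ p.1.1 t} =
      Nat.card (BadPair m) := by
    apply Nat.card_congr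
    apply Equiv.subtypeEquivRight
    intro p
    constructor
    · intro h
      push_neg at h
      obtain ⟨t, ht⟩ := h
      exact ⟨t, ht⟩
    · intro ⟨t, ht⟩ h
      exact absurd (h t) (not_le.mpr ht)
  have h5 : Nat.card (DSeq (m+1) (m+1) × DSeq (m+1) (m+1)) = ((2*m+2).choose (m+1))^2 := by
    rw [Nat.card_prod, card_dseq]
    have e1 : m + 1 + (m+1) = 2*m+2 := by ring
    rw [e1, sq]
  omega

lemma arith (m : ℕ) :
    (((2*m+2).choose (m+1) : ℚ))^2 - ((2*m+2).choose (m+2) : ℚ) * ((2*m+2).choose m : ℚ) =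
      ((2*(m+1)).factorial : ℚ) * ((2*(m+1)+1).factorial : ℚ) /
        (((m+1).factorial : ℚ) * (((m+1)+1).factorial : ℚ))^2 := by
  have e1 : ((2*m+2).choose (m+1) : ℚ) =
      ((2*m+2).factorial : ℚ) / (((m+1).factorial : ℚ) * ((m+1).factorial : ℚ)) := by
    rw [Nat.cast_choose ℚ (show m+1 ≤ 2*m+2 by omega),
      show 2*m+2 - (m+1) = m+1 by omega]
    try push_cast
    try ring
  have e2 : ((2*m+2).choose (m+2) : ℚ) =
      ((2*m+2).factorial : ℚ) / (((m+2).factorial : ℚ) * ((m).factorial : ℚ)) := by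
    rw [Nat.cast_choose ℚ (show m+2 ≤ 2*m+2 by omega),
      show 2*m+2 - (m+2) = m by omega]
    try push_cast
    try ring
  have e3 : ((2*m+2).choose m : ℚ) =
      ((2*m+2).factorial : ℚ) / (((m).factorial : ℚ) * ((m+2).factorial : ℚ)) := by
    rw [Nat.cast_choose ℚ (show m ≤ 2*m+2 by omega),
      show 2*m+2 - m = m+2 by omega]
    try push_cast
    try ring
  have g0 : (2*(m+1)) = 2*m+2 := by ring
  have g1 : (2*(m+1)+1) = (2*m+2)+1 := by ring
  have g2 : ((2*m+2+1).factorial : ℚ) = (2*m+3) * ((2*m+2).factorial : ℚ) := by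
    rw [Nat.factorial_succ]
    try push_cast
    try ring
  have g3 : (((m+1)+1).factorial : ℚ) = (m+2) * ((m+1).factorial : ℚ) := by
    rw [Nat.factorial_succ]
    try push_cast
    try ring
  have g4 : ((m+2).factorial : ℚ) = (m+2) * ((m+1).factorial : ℚ) := by
    rw [show m+2 = (m+1)+1 from rfl, Nat.factorial_succ]
    try push_cast
    try ring
  have g5 : ((m+1).factorial : ℚ) = (m+1) * ((m).factorial : ℚ) := by
    rw [Nat.factorial_succ]
    try push_cast
    try ring
  rw [e1, e2, e3, g0, g2, g3, g5]
  have hm : ((m).factorial : ℚ) ≠ 0 := by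
    exact_mod_cast Nat.factorial_ne_zero m
  have h2 : ((2*m+2).factorial : ℚ) ≠ 0 := by
    exact_mod_cast Nat.factorial_ne_zero (2*m+2)
  have hm1 : ((m:ℚ) + 1) ≠ 0 := by positivity
  have hm2 : ((m:ℚ) + 2) ≠ 0 := by positivity
  field_simp
  ring

end FinalCount

/-- For `n ≥ 1`, the number of plane partitions with `n` rows, `n` columns and
largest part at most 2 equals `(2n)!(2n+1)! / (n!(n+1)!)²`. -/
theorem square_plane_partitions_le_two_count (n : ℕ) (hn : 1 ≤ n) :
    (Nat.card {π : Fin n → Fin n → ℕ //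
        (∀ i j, π i j ≤ 2) ∧
        (∀ i i' j j', i ≤ i' → j ≤ j' → π i' j' ≤ π i j)} : ℚ) =
      ((2 * n).factorial * (2 * n + 1).factorial : ℚ) /
        ((n.factorial * (n + 1).factorial : ℚ)) ^ 2 := by
  obtain ⟨m, rfl⟩ : ∃ m, n = m + 1 := ⟨n - 1, by omega⟩
  have key : (Nat.card (PP (m+1)) : ℚ) =
      (((2*m+2).choose (m+1) : ℚ))^2 -
        ((2*m+2).choose (m+2) : ℚ) * ((2*m+2).choose m : ℚ) := by
    have h := congrArg (fun x : ℕ => (x : ℚ)) (card_pp m)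
    push_cast at h
    linarith
  show (Nat.card (PP (m+1)) : ℚ) = _
  rw [key, arith m]
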